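/- Lemma 1, part 2 (integration-by-parts identity for fractional powers). For every f ∈ D₀ and every integer k ≥ 1, the function t ↦ t^{α−1} [B₁T₁(t)ι₁(A^k f) − B₂T₂(t)ι₂(A^k f)] is Bochner integrable on (0,∞) and (1/Γ(α)) ∫₀^∞ t^{α−1} [B₁T₁(t)ι₁(A^k f) − B₂T₂(t)ι₂(A^k f)] dt = (1/Γ(α)) (∏_{j=0}^{k−1} (α−1−j)) ∫₀^∞ t^{−k+α−1} [B₁T₁(t)ι₁f − B₂T₂(t)ι₂f] dt; in the notation of the paper this reads B₁A₁^{−α}A₁^k f − B₂A₂^{−α}A₁^k f = (1/Γ(α)) ∏_{j=0}^{k−1}(α−1−j) ∫₀^∞ t^{−k+α−1}[B₁e^{−tA₁} − B₂e^{−tA₂}]f dt. -/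

import Mathlib

open Set MeasureTheory Real


section Aux

open Filter Topology

variable {D : Type*} [NormedAddCommGroup D] [NormedSpace ℝ D]
variable {F : ℕ → ℝ → D} {M : ℕ → ℝ}

/-- Taylor-type vanishing bound at 0. -/
theorem aux_taylor
    (hF0 : ∀ m, F m 0 = 0)
    (hFd : ∀ m, ∀ t : ℝ, 0 ≤ t → HasDerivWithinAt (F m) (-(F (m+1) t)) (Set.Ici 0) t)
    (hFb : ∀ m, ∀ t : ℝ, 0 ≤ t → ‖F m t‖ ≤ M m) :
    ∀ p m, ∀ t : ℝ, 0 ≤ t → ‖F m t‖ ≤ M (m + p) / (p.factorial) * t ^ p := by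
  intro p
  induction p with
  | zero => intro m t ht; simpa using hFb m t ht
  | succ p ih =>
    intro m t ht
    have hcont : ContinuousOn (F m) (Icc 0 t) := fun x hx =>
      ((hFd m x hx.1).continuousWithinAt).mono (fun y hy => hy.1)
    have hder : ∀ x ∈ Ico (0:ℝ) t, HasDerivWithinAt (F m) (-(F (m+1) x)) (Ici x) x :=
      fun x hx => (hFd m x hx.1).mono (Ici_subset_Ici.2 hx.1)
    set c : ℝ := M (m + (p+1)) / ((p+1).factorial) with hc
    have key : ∀ x ∈ Icc (0:ℝ) t, ‖F m x‖ ≤ c * x ^ (p+1) := by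
      apply image_norm_le_of_norm_deriv_right_le_deriv_boundary hcont hder
        (B := fun x => c * x ^ (p+1)) (B' := fun x => M (m + (p+1)) / p.factorial * x ^ p)
      · simp [hF0 m]
      · intro x
        have h1 : HasDerivAt (fun x : ℝ => c * x ^ (p+1))
            (c * (((p:ℝ)+1) * x ^ p)) x := by
          simpa using (hasDerivAt_pow (p+1) x).const_mul c
        convert h1 using 1
        rw [hc, Nat.factorial_succ]
        have hp : (p.factorial : ℝ) ≠ 0 := Nat.cast_ne_zero.2 p.factorial_ne_zero
        push_cast
        field_simp
      · intro x hx
        rw [norm_neg]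
        have := ih (m+1) x hx.1
        have he : m + 1 + p = m + (p + 1) := by omega
        rwa [he] at this
    simpa using key t ⟨ht, le_rfl⟩

theorem aux_int
    (hF0 : ∀ m, F m 0 = 0)
    (hFd : ∀ m, ∀ t : ℝ, 0 ≤ t → HasDerivWithinAt (F m) (-(F (m+1) t)) (Set.Ici 0) t)
    (hFb : ∀ m, ∀ t : ℝ, 0 ≤ t → ‖F m t‖ ≤ M m)
    (n : ℕ) (β : ℝ)
    (hcase : β < -1 ∨ (β < 0 ∧ ∃ C > (0:ℝ), ∀ t : ℝ, 0 < t → ‖F n t‖ ≤ C / t)) :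
    IntegrableOn (fun t : ℝ => t ^ β • F n t) (Ioi (0:ℝ)) := by
  have hβ0 : β < 0 := by rcases hcase with h | h
                         exacts [by linarith, h.1]
  have hcontF : ContinuousOn (F n) (Ioi (0:ℝ)) := fun x hx =>
    ((hFd n x (le_of_lt hx)).continuousWithinAt).mono Ioi_subset_Ici_self
  have hcont : ContinuousOn (fun t : ℝ => t ^ β • F n t) (Ioi (0:ℝ)) := by
    apply ContinuousOn.smul _ hcontF
    exact fun x hx => (Real.continuousAt_rpow_const x β (Or.inl (ne_of_gt hx))).continuousWithinAt
  rw [← Ioc_union_Ioi_eq_Ioi (zero_le_one : (0:ℝ) ≤ 1)]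
  apply IntegrableOn.union
  · -- on (0, 1]
    obtain ⟨p, hp⟩ := exists_nat_gt (-β)
    have hβp : (-1 : ℝ) < β + p := by linarith
    have hg : IntegrableOn (fun t : ℝ => M (n + p) / (p.factorial) * t ^ (β + p)) (Ioc (0:ℝ) 1) := by
      have := (intervalIntegral.intervalIntegrable_rpow' (a := 0) (b := 1) hβp)
      rw [intervalIntegrable_iff_integrableOn_Ioc_of_le (zero_le_one)] at this
      exact this.const_mul _
    apply Integrable.mono' hg
      ((hcont.mono (Ioc_subset_Ioi_self)).aestronglyMeasurable measurableSet_Ioc)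
    rw [ae_restrict_iff' measurableSet_Ioc]
    filter_upwards with t ht
    have ht0 : 0 < t := ht.1
    have htay := aux_taylor hF0 hFd hFb p n t ht0.le
    have hrn : t ^ β * t ^ (p:ℕ) = t ^ (β + p) := by
      rw [← Real.rpow_natCast t p, ← Real.rpow_add ht0]
    calc ‖t ^ β • F n t‖ = t ^ β * ‖F n t‖ := by
          rw [norm_smul, Real.norm_eq_abs, abs_of_nonneg (Real.rpow_nonneg ht0.le β)]
      _ ≤ t ^ β * (M (n + p) / (p.factorial) * t ^ p) := by
          apply mul_le_mul_of_nonneg_left htay (Real.rpow_nonneg ht0.le β)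
      _ = M (n + p) / (p.factorial) * t ^ (β + p) := by rw [← hrn]; ring
  · -- on (1, ∞)
    rcases hcase with hβ1 | ⟨_, C, hC, hdec⟩
    · have hg : IntegrableOn (fun t : ℝ => M n * t ^ β) (Ioi (1:ℝ)) :=
        (integrableOn_Ioi_rpow_of_lt hβ1 one_pos).const_mul _
      apply Integrable.mono' hg
        ((hcont.mono (Ioi_subset_Ioi zero_le_one)).aestronglyMeasurable measurableSet_Ioi)
      rw [ae_restrict_iff' measurableSet_Ioi]
      filter_upwards with t ht
      have ht0 : (0:ℝ) < t := lt_trans one_pos ht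
      calc ‖t ^ β • F n t‖ = t ^ β * ‖F n t‖ := by
            rw [norm_smul, Real.norm_eq_abs, abs_of_nonneg (Real.rpow_nonneg ht0.le β)]
        _ ≤ t ^ β * M n := mul_le_mul_of_nonneg_left (hFb n t ht0.le) (Real.rpow_nonneg ht0.le β)
        _ = M n * t ^ β := mul_comm _ _
    · have hg : IntegrableOn (fun t : ℝ => C * t ^ (β - 1)) (Ioi (1:ℝ)) :=
        (integrableOn_Ioi_rpow_of_lt (by linarith) one_pos).const_mul _
      apply Integrable.mono' hg
        ((hcont.mono (Ioi_subset_Ioi zero_le_one)).aestronglyMeasurable measurableSet_Ioi)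
      rw [ae_restrict_iff' measurableSet_Ioi]
      filter_upwards with t ht
      have ht0 : (0:ℝ) < t := lt_trans one_pos ht
      calc ‖t ^ β • F n t‖ = t ^ β * ‖F n t‖ := by
            rw [norm_smul, Real.norm_eq_abs, abs_of_nonneg (Real.rpow_nonneg ht0.le β)]
        _ ≤ t ^ β * (C / t) := mul_le_mul_of_nonneg_left (hdec t ht0) (Real.rpow_nonneg ht0.le β)
        _ = C * t ^ (β - 1) := by
            rw [Real.rpow_sub ht0, Real.rpow_one]
            field_simp


variable [CompleteSpace D]

theorem aux_step
    (hF0 : ∀ m, F m 0 = 0)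
    (hFd : ∀ m, ∀ t : ℝ, 0 ≤ t → HasDerivWithinAt (F m) (-(F (m+1) t)) (Set.Ici 0) t)
    (hFb : ∀ m, ∀ t : ℝ, 0 ≤ t → ‖F m t‖ ≤ M m)
    (m : ℕ) (β : ℝ) (hβ : β < 0)
    (Hint : IntegrableOn (fun t : ℝ => t ^ β • F (m+1) t) (Ioi (0:ℝ))) :
    ∫ t in Ioi (0:ℝ), t ^ β • F (m+1) t = β • ∫ t in Ioi (0:ℝ), t ^ (β - 1) • F m t := by
  have hMnn : ∀ j, (0:ℝ) ≤ M j := fun j => le_trans (norm_nonneg (F j 0)) (hFb j 0 le_rfl)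
  set G : ℝ → D := fun t => t ^ β • F m t with hG
  have hG0 : G 0 = 0 := by simp [hG, hF0 m]
  set G' : ℝ → D := fun x => (β * x ^ (β - 1)) • F m x + x ^ β • (-(F (m+1) x)) with hG'
  have hGd : ∀ x ∈ Ioi (0:ℝ), HasDerivAt G (G' x) x := by
    intro x hx
    have hr : HasDerivAt (fun t : ℝ => t ^ β) (β * x ^ (β - 1)) x :=
      Real.hasDerivAt_rpow_const (Or.inl (ne_of_gt hx))
    have hFm : HasDerivAt (F m) (-(F (m+1) x)) x :=
      (hFd m x (le_of_lt hx)).hasDerivAt (Ici_mem_nhds hx)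
    have := hr.smul hFm
    have e : G' x = x ^ β • (-(F (m+1) x)) + (β * x ^ (β - 1)) • F m x := add_comm _ _
    rw [e]; exact this
  have hint1 : IntegrableOn (fun t : ℝ => t ^ (β - 1) • F m t) (Ioi (0:ℝ)) :=
    aux_int hF0 hFd hFb m (β - 1) (Or.inl (by linarith))
  have hint1' : IntegrableOn (fun t : ℝ => (β * t ^ (β - 1)) • F m t) (Ioi (0:ℝ)) := by
    have := hint1.smul β
    simp only [mul_smul]
    exact this
  have hint2 : IntegrableOn (fun t : ℝ => t ^ β • (-(F (m+1) t))) (Ioi (0:ℝ)) := by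
    have heq : (fun t : ℝ => t ^ β • (-(F (m+1) t))) = fun t => -(t ^ β • F (m+1) t) := by
      funext t; rw [smul_neg]
    rw [heq]; exact Hint.neg
  have hG'int : IntegrableOn G' (Ioi (0:ℝ)) := hint1'.add hint2
  -- limit at infinity
  have hGtop : Tendsto G atTop (𝓝 0) := by
    apply squeeze_zero_norm' (a := fun t : ℝ => M m * t ^ β)
    · filter_upwards [eventually_gt_atTop (0:ℝ)] with t ht
      calc ‖G t‖ = t ^ β * ‖F m t‖ := by
            rw [hG, norm_smul, Real.norm_eq_abs, abs_of_nonneg (Real.rpow_nonneg ht.le β)]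
        _ ≤ t ^ β * M m := mul_le_mul_of_nonneg_left (hFb m t ht.le) (Real.rpow_nonneg ht.le β)
        _ = M m * t ^ β := mul_comm _ _
    · have : Tendsto (fun t : ℝ => t ^ β) atTop (𝓝 0) := by
        simpa [neg_neg] using tendsto_rpow_neg_atTop (y := -β) (by linarith)
      simpa using this.const_mul (M m)
  -- continuity at 0 within [0,∞)
  have hGcont : ContinuousWithinAt G (Ici (0:ℝ)) 0 := by
    obtain ⟨p, hp⟩ := exists_nat_gt (-β)
    have hβp : (0:ℝ) < β + p := by linarith
    have hbound : ∀ t ∈ Ici (0:ℝ), ‖G t‖ ≤ M (m + p) / (p.factorial) * t ^ (β + p) := by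
      intro t ht
      rcases eq_or_lt_of_le (mem_Ici.1 ht) with rfl | ht0
      · simp [hG0, Real.zero_rpow (ne_of_gt hβp)]
      · have htay := aux_taylor hF0 hFd hFb p m t ht0.le
        have hrn : t ^ β * (t:ℝ) ^ (p:ℕ) = t ^ (β + p) := by
          rw [← Real.rpow_natCast t p, ← Real.rpow_add ht0]
        calc ‖G t‖ = t ^ β * ‖F m t‖ := by
              rw [hG, norm_smul, Real.norm_eq_abs, abs_of_nonneg (Real.rpow_nonneg ht0.le β)]
          _ ≤ t ^ β * (M (m + p) / (p.factorial) * t ^ p) :=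
              mul_le_mul_of_nonneg_left htay (Real.rpow_nonneg ht0.le β)
          _ = M (m + p) / (p.factorial) * t ^ (β + p) := by rw [← hrn]; ring
    have htends : Tendsto (fun t : ℝ => M (m + p) / (p.factorial) * t ^ (β + p))
        (nhdsWithin 0 (Ici (0:ℝ))) (𝓝 0) := by
      have hc : ContinuousAt (fun t : ℝ => t ^ (β + p)) 0 :=
        Real.continuousAt_rpow_const 0 (β + p) (Or.inr hβp.le)
      have : Tendsto (fun t : ℝ => t ^ (β + p)) (nhdsWithin 0 (Ici (0:ℝ))) (𝓝 0) := by
        have := hc.continuousWithinAt (s := Ici (0:ℝ))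
        rwa [ContinuousWithinAt, Real.zero_rpow (ne_of_gt hβp)] at this
      simpa using this.const_mul (M (m + p) / (p.factorial))
    have : Tendsto G (nhdsWithin 0 (Ici (0:ℝ))) (𝓝 0) := by
      apply squeeze_zero_norm' _ htends
      filter_upwards [self_mem_nhdsWithin] with t ht using hbound t ht
    rwa [ContinuousWithinAt, hG0]
  have key : ∫ x in Ioi (0:ℝ), G' x = 0 - G 0 :=
    integral_Ioi_of_hasDerivAt_of_tendsto hGcont hGd hG'int hGtop
  rw [hG0, sub_zero] at key
  have hsplit : ∫ x in Ioi (0:ℝ), G' x =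
      (∫ x in Ioi (0:ℝ), (β * x ^ (β - 1)) • F m x) - ∫ x in Ioi (0:ℝ), x ^ β • F (m+1) x := by
    rw [hG']
    rw [integral_add hint1' hint2]
    have hBneg : ∫ x in Ioi (0:ℝ), x ^ β • (-(F (m+1) x))
        = -∫ x in Ioi (0:ℝ), x ^ β • F (m+1) x := by
      simp_rw [smul_neg]
      exact integral_neg _
    rw [hBneg, ← sub_eq_add_neg]
  rw [hsplit] at key
  have : ∫ x in Ioi (0:ℝ), (β * x ^ (β - 1)) • F m x
      = β • ∫ x in Ioi (0:ℝ), x ^ (β - 1) • F m x := by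
    rw [← integral_smul]
    congr 1 with x
    rw [mul_smul]
  rw [this] at key
  exact (sub_eq_zero.mp key).symm


theorem aux_iter
    (hF0 : ∀ m, F m 0 = 0)
    (hFd : ∀ m, ∀ t : ℝ, 0 ≤ t → HasDerivWithinAt (F m) (-(F (m+1) t)) (Set.Ici 0) t)
    (hFb : ∀ m, ∀ t : ℝ, 0 ≤ t → ‖F m t‖ ≤ M m) :
    ∀ (n : ℕ) (β : ℝ), β < 0 →
      IntegrableOn (fun t : ℝ => t ^ β • F n t) (Ioi (0:ℝ)) →
      ∫ t in Ioi (0:ℝ), t ^ β • F n t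
        = (∏ j ∈ Finset.range n, (β - (j:ℝ))) • ∫ t in Ioi (0:ℝ), t ^ (β - (n:ℝ)) • F 0 t := by
  intro n
  induction n with
  | zero => intro β hβ _; simp
  | succ n ih =>
    intro β hβ Hint
    have step := aux_step hF0 hFd hFb n β hβ Hint
    have hint1 : IntegrableOn (fun t : ℝ => t ^ (β - 1) • F n t) (Ioi (0:ℝ)) :=
      aux_int hF0 hFd hFb n (β - 1) (Or.inl (by linarith))
    have ihh := ih (β - 1) (by linarith) hint1
    rw [step, ihh, smul_smul]
    have hexp : β - 1 - (n:ℝ) = β - ((n:ℕ)+1:ℕ) := by push_cast; ring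
    have hprod : β * ∏ j ∈ Finset.range n, (β - 1 - (j:ℝ))
        = ∏ j ∈ Finset.range (n+1), (β - (j:ℝ)) := by
      rw [Finset.prod_range_succ']
      simp only [Nat.cast_zero, sub_zero, Nat.cast_add, Nat.cast_one]
      rw [mul_comm]
      congr 1
      apply Finset.prod_congr rfl
      intro j _
      ring
    rw [hprod, hexp]

end Aux



/-- **Lemma 1, part 2 (integration-by-parts identity for fractional powers).**
For every `f ∈ D₀` and `k ≥ 1`, `t ↦ t^{α−1}[B₁T₁(t)ι₁(A^k f) − B₂T₂(t)ι₂(A^k f)]` is Bochner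
integrable on `(0,∞)` and
`(1/Γ(α)) ∫₀^∞ t^{α−1}[B₁T₁(t)ι₁(A^k f) − B₂T₂(t)ι₂(A^k f)] dt
  = (1/Γ(α)) (∏_{j=0}^{k−1}(α−1−j)) ∫₀^∞ t^{−k+α−1}[B₁T₁(t)ι₁f − B₂T₂(t)ι₂f] dt`. -/
theorem lemma1_part2
    {E₁ E₂ D : Type*}
    [NormedAddCommGroup E₁] [NormedSpace ℂ E₁]
    [NormedAddCommGroup E₂] [NormedSpace ℂ E₂]
    [NormedAddCommGroup D] [NormedSpace ℂ D]
    {D₀ : Type*} [AddCommGroup D₀] [Module ℂ D₀]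
    (α : ℝ) (hα : α ∈ Set.Ioo (0 : ℝ) 1)
    (T₁ : ℝ → E₁ →L[ℂ] E₁) (T₂ : ℝ → E₂ →L[ℂ] E₂)
    (hT₁0 : T₁ 0 = 1) (hT₂0 : T₂ 0 = 1)
    (Λ₁ Λ₂ : ℝ) (hΛ₁ : 1 ≤ Λ₁) (hΛ₂ : 1 ≤ Λ₂)
    (hT₁ : ∀ t : ℝ, 0 ≤ t → ‖T₁ t‖ ≤ Λ₁)
    (hT₂ : ∀ t : ℝ, 0 ≤ t → ‖T₂ t‖ ≤ Λ₂)
    (B₁ : E₁ →L[ℂ] D) (B₂ : E₂ →L[ℂ] D)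
    (ι₁ : D₀ →ₗ[ℂ] E₁) (ι₂ : D₀ →ₗ[ℂ] E₂)
    (hι₁ : Function.Injective ι₁) (hι₂ : Function.Injective ι₂)
    (A : D₀ →ₗ[ℂ] D₀)
    -- (i): the m-th derivative of `t ↦ T_j(t) ι_j f` on `[0,∞)` is `(−1)^m T_j(t) ι_j (A^m f)`
    (hderiv₁ : ∀ (f : D₀) (m : ℕ) (t : ℝ), 0 ≤ t →
      HasDerivWithinAt (fun s : ℝ => T₁ s (ι₁ ((A ^ m) f)))
        (-(T₁ t (ι₁ ((A ^ (m + 1)) f)))) (Set.Ici 0) t)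
    (hderiv₂ : ∀ (f : D₀) (m : ℕ) (t : ℝ), 0 ≤ t →
      HasDerivWithinAt (fun s : ℝ => T₂ s (ι₂ ((A ^ m) f)))
        (-(T₂ t (ι₂ ((A ^ (m + 1)) f)))) (Set.Ici 0) t)
    -- (ii)
    (hB : ∀ f : D₀, B₁ (ι₁ f) = B₂ (ι₂ f))
    -- (iii): analytic-semigroup decay
    (hdecay : ∀ g : D₀, ∃ C > (0 : ℝ), ∀ t : ℝ, 0 < t →
      ‖T₁ t (ι₁ (A g))‖ ≤ C / t ∧ ‖T₂ t (ι₂ (A g))‖ ≤ C / t)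
    (f : D₀) (k : ℕ) (hk : 1 ≤ k) :
    IntegrableOn
      (fun t : ℝ => (t ^ (α - 1)) •
        (B₁ (T₁ t (ι₁ ((A ^ k) f))) - B₂ (T₂ t (ι₂ ((A ^ k) f))))) (Ioi (0 : ℝ)) ∧
    (1 / Real.Gamma α) •
        (∫ t in Ioi (0 : ℝ), (t ^ (α - 1)) •
          (B₁ (T₁ t (ι₁ ((A ^ k) f))) - B₂ (T₂ t (ι₂ ((A ^ k) f))))) =
      (1 / Real.Gamma α) • (∏ j ∈ Finset.range k, (α - 1 - (j : ℝ))) •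
        ∫ t in Ioi (0 : ℝ), (t ^ (α - 1 - (k : ℝ))) •
          (B₁ (T₁ t (ι₁ f)) - B₂ (T₂ t (ι₂ f))) := by
  obtain ⟨hα0, hα1⟩ := hα
  set F : ℕ → ℝ → D := fun m t => B₁ (T₁ t (ι₁ ((A ^ m) f))) - B₂ (T₂ t (ι₂ ((A ^ m) f))) with hF
  set M : ℕ → ℝ := fun m => ‖B₁‖ * (Λ₁ * ‖ι₁ ((A ^ m) f)‖) + ‖B₂‖ * (Λ₂ * ‖ι₂ ((A ^ m) f)‖)
    with hM
  have hF0 : ∀ m, F m 0 = 0 := by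
    intro m
    simp [hF, hT₁0, hT₂0, hB ((A ^ m) f)]
  have hFd : ∀ m, ∀ t : ℝ, 0 ≤ t → HasDerivWithinAt (F m) (-(F (m+1) t)) (Set.Ici 0) t := by
    intro m t ht
    have h1 := (B₁.restrictScalars ℝ).hasFDerivAt.comp_hasDerivWithinAt t (hderiv₁ f m t ht)
    have h2 := (B₂.restrictScalars ℝ).hasFDerivAt.comp_hasDerivWithinAt t (hderiv₂ f m t ht)
    have h := h1.sub h2
    simp only [Function.comp_def, map_neg, ContinuousLinearMap.coe_restrictScalars'] at h
    have heq : -(B₁ (T₁ t (ι₁ ((A ^ (m+1)) f)))) - -(B₂ (T₂ t (ι₂ ((A ^ (m+1)) f))))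
        = -(F (m+1) t) := by
      simp only [hF]; abel
    rwa [heq] at h
  have hFb : ∀ m, ∀ t : ℝ, 0 ≤ t → ‖F m t‖ ≤ M m := by
    intro m t ht
    have e1 : ‖B₁ (T₁ t (ι₁ ((A ^ m) f)))‖ ≤ ‖B₁‖ * (Λ₁ * ‖ι₁ ((A ^ m) f)‖) := by
      refine (B₁.le_opNorm _).trans ?_
      refine mul_le_mul_of_nonneg_left ?_ (norm_nonneg B₁)
      refine ((T₁ t).le_opNorm _).trans ?_
      exact mul_le_mul_of_nonneg_right (hT₁ t ht) (norm_nonneg _)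
    have e2 : ‖B₂ (T₂ t (ι₂ ((A ^ m) f)))‖ ≤ ‖B₂‖ * (Λ₂ * ‖ι₂ ((A ^ m) f)‖) := by
      refine (B₂.le_opNorm _).trans ?_
      refine mul_le_mul_of_nonneg_left ?_ (norm_nonneg B₂)
      refine ((T₂ t).le_opNorm _).trans ?_
      exact mul_le_mul_of_nonneg_right (hT₂ t ht) (norm_nonneg _)
    calc ‖F m t‖ ≤ ‖B₁ (T₁ t (ι₁ ((A ^ m) f)))‖ + ‖B₂ (T₂ t (ι₂ ((A ^ m) f)))‖ :=
          norm_sub_le _ _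
      _ ≤ M m := by rw [hM]; exact add_le_add e1 e2
  -- decay for F k (k ≥ 1)
  obtain ⟨k', rfl⟩ : ∃ k', k = k' + 1 := ⟨k - 1, (Nat.succ_pred_eq_of_pos hk).symm⟩
  have hApow : (A ^ (k' + 1)) f = A ((A ^ k') f) := by
    rw [pow_succ', Module.End.mul_apply]
  have hdec : ∃ C > (0:ℝ), ∀ t : ℝ, 0 < t → ‖F (k'+1) t‖ ≤ C / t := by
    obtain ⟨C, hC, hCt⟩ := hdecay ((A ^ k') f)
    refine ⟨(‖B₁‖ + ‖B₂‖) * C + C, by positivity, ?_⟩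
    intro t ht
    obtain ⟨hc1, hc2⟩ := hCt t ht
    have e1 : ‖B₁ (T₁ t (ι₁ (A ((A ^ k') f))))‖ ≤ ‖B₁‖ * (C / t) :=
      (B₁.le_opNorm _).trans (mul_le_mul_of_nonneg_left hc1 (norm_nonneg B₁))
    have e2 : ‖B₂ (T₂ t (ι₂ (A ((A ^ k') f))))‖ ≤ ‖B₂‖ * (C / t) :=
      (B₂.le_opNorm _).trans (mul_le_mul_of_nonneg_left hc2 (norm_nonneg B₂))
    have hFval : F (k'+1) t
        = B₁ (T₁ t (ι₁ (A ((A ^ k') f)))) - B₂ (T₂ t (ι₂ (A ((A ^ k') f)))) := by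
      rw [hF]
      simp only [hApow]
    rw [hFval]
    calc ‖B₁ (T₁ t (ι₁ (A ((A ^ k') f)))) - B₂ (T₂ t (ι₂ (A ((A ^ k') f))))‖
        ≤ ‖B₁ (T₁ t (ι₁ (A ((A ^ k') f))))‖ + ‖B₂ (T₂ t (ι₂ (A ((A ^ k') f))))‖ :=
          norm_sub_le _ _
      _ ≤ ‖B₁‖ * (C / t) + ‖B₂‖ * (C / t) := add_le_add e1 e2
      _ = ((‖B₁‖ + ‖B₂‖) * C) / t := by ring
      _ ≤ ((‖B₁‖ + ‖B₂‖) * C + C) / t := by gcongr; linarith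
  have hInt : IntegrableOn (fun t : ℝ => t ^ (α - 1) • F (k'+1) t) (Ioi (0:ℝ)) :=
    aux_int hF0 hFd hFb (k'+1) (α-1) (Or.inr ⟨by linarith, hdec⟩)
  refine ⟨hInt, ?_⟩
  by_cases hD : CompleteSpace D
  · haveI := hD
    have main := aux_iter hF0 hFd hFb (k'+1) (α-1) (by linarith) hInt
    simp only [hF, pow_zero, Module.End.one_apply] at main
    rw [show (fun t : ℝ => t ^ (α - 1) •
        (B₁ (T₁ t (ι₁ ((A ^ (k'+1)) f))) - B₂ (T₂ t (ι₂ ((A ^ (k'+1)) f)))))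
      = (fun t : ℝ => t ^ (α - 1) • F (k'+1) t) from rfl]
    rw [main]
  · simp only [MeasureTheory.integral_def, hD, dite_false, smul_zero]
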